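/- Let t_N, r_N be the comb-graph amplitudes t_N = −ε^{1−N}/(ε U_{N−2}(ζ) − (1+iβ)U_{N−1}(ζ)), r_N = iβ U_{N−1}(ζ)/(ε U_{N−2}(ζ) − (1+iβ)U_{N−1}(ζ)), and let t = t_1, r = r_1. Then they satisfy the factorization recursions r_{N+1} = r_N + ε^{2N} r t_N² / (1 − ε² r r_N) and t_{N+1} = t t_N / (1 − ε² r r_N). -/

import Mathlib

open Complex Polynomial

/-- The comb-graph amplitudes satisfy the S-matrix factorization recursions. -/
theorem comb_graph_factorization (β k ℓ : ℝ)
    (ε : ℂ) (hε : ε = Complex.exp (Complex.I * k * ℓ))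
    (ζ : ℝ) (hζ : ζ = Real.cos (k * ℓ) + β * Real.sin (k * ℓ))
    (Den : ℕ → ℂ)
    (hDen : ∀ N : ℕ, Den N = ε * (Polynomial.Chebyshev.U ℂ ((N : ℤ) - 2)).eval (ζ : ℂ)
        - (1 + Complex.I * β) * (Polynomial.Chebyshev.U ℂ ((N : ℤ) - 1)).eval (ζ : ℂ))
    (hDen0 : ∀ N : ℕ, Den N ≠ 0)
    (tN rN : ℕ → ℂ)
    (htN : ∀ N : ℕ, tN N = -ε ^ (1 - (N : ℤ)) / Den N)
    (hrN : ∀ N : ℕ, rN N = Complex.I * β *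
      (Polynomial.Chebyshev.U ℂ ((N : ℤ) - 1)).eval (ζ : ℂ) / Den N)
    (t r : ℂ) (ht : t = tN 1) (hr : r = rN 1)
    (hnz : ∀ N : ℕ, 1 - ε ^ 2 * r * rN N ≠ 0) :
    ∀ N : ℕ, 1 ≤ N →
      rN (N + 1) = rN N + ε ^ (2 * N) * r * (tN N) ^ 2 / (1 - ε ^ 2 * r * rN N) ∧
      tN (N + 1) = t * tN N / (1 - ε ^ 2 * r * rN N) := by
  have hε0 : ε ≠ 0 := by rw [hε]; exact Complex.exp_ne_zero _
  set z : ℂ := (ζ : ℂ) with hz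
  -- the key relation between ε and ζ
  have hη : ε * Complex.exp (-((k : ℂ) * ℓ) * Complex.I) = 1 := by
    rw [hε, ← Complex.exp_add, show Complex.I * k * ℓ + -((k : ℂ) * ℓ) * Complex.I = 0 by ring,
      Complex.exp_zero]
  have hεx : ε = Complex.exp (((k : ℂ) * ℓ) * Complex.I) := by
    rw [hε]; ring_nf
  have hkey : 2 * z * ε = ε ^ 2 * (1 - Complex.I * β) + (1 + Complex.I * β) := by
    have hc : 2 * Complex.cos ((k : ℂ) * ℓ) =
        Complex.exp (((k : ℂ) * ℓ) * Complex.I) + Complex.exp (-((k : ℂ) * ℓ) * Complex.I) :=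
      Complex.two_cos _
    have hs : 2 * Complex.sin ((k : ℂ) * ℓ) =
        (Complex.exp (-((k : ℂ) * ℓ) * Complex.I) - Complex.exp (((k : ℂ) * ℓ) * Complex.I)) *
          Complex.I := Complex.two_sin _
    have hzc : z = Complex.cos ((k : ℂ) * ℓ) + β * Complex.sin ((k : ℂ) * ℓ) := by
      rw [hz, hζ]
      push_cast [Complex.ofReal_cos, Complex.ofReal_sin]
      ring
    rw [hzc, ← hεx] at *
    rw [← hεx] at hc hs
    set η := Complex.exp (-((k : ℂ) * ℓ) * Complex.I) with hηd
    linear_combination ε * hc + (ε * β) * hs + (1 + β * Complex.I) * hη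
  -- Chebyshev determinant identity
  have hdet : ∀ n : ℕ, (Polynomial.Chebyshev.U ℂ ((n : ℤ) + 1)).eval z *
      (Polynomial.Chebyshev.U ℂ ((n : ℤ) - 1)).eval z =
      ((Polynomial.Chebyshev.U ℂ (n : ℤ)).eval z) ^ 2 - 1 := by
    intro n
    induction n with
    | zero => simp [Polynomial.Chebyshev.U_neg_one, Polynomial.Chebyshev.U_zero,
        Polynomial.Chebyshev.U_one]
    | succ m ih =>
      have h1 : Polynomial.Chebyshev.U ℂ ((m : ℤ) + 2) =
          2 * X * Polynomial.Chebyshev.U ℂ ((m : ℤ) + 1) - Polynomial.Chebyshev.U ℂ (m : ℤ) :=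
        Polynomial.Chebyshev.U_add_two ℂ (m : ℤ)
      have h2 : Polynomial.Chebyshev.U ℂ ((m : ℤ) + 1) =
          2 * X * Polynomial.Chebyshev.U ℂ (m : ℤ) - Polynomial.Chebyshev.U ℂ ((m : ℤ) - 1) := by
        have := Polynomial.Chebyshev.U_add_two ℂ ((m : ℤ) - 1)
        simpa [sub_add_cancel, show (m : ℤ) - 1 + 2 = (m : ℤ) + 1 by ring,
          show (m : ℤ) - 1 + 1 = (m : ℤ) by ring] using this
      have e1 := congrArg (Polynomial.eval z) h1
      have e2 := congrArg (Polynomial.eval z) h2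
      simp only [Polynomial.eval_sub, Polynomial.eval_mul, Polynomial.eval_ofNat,
        Polynomial.eval_X] at e1 e2
      push_cast
      rw [show ((m : ℤ) + 1 + 1 : ℤ) = (m : ℤ) + 2 by ring,
        show ((m : ℤ) + 1 - 1 : ℤ) = (m : ℤ) by ring]
      linear_combination (Polynomial.Chebyshev.U ℂ (m : ℤ)).eval z * e1 -
        (Polynomial.Chebyshev.U ℂ ((m : ℤ) + 1)).eval z * e2 + ih
  -- values at N = 1
  have hDen1 : Den 1 = -(1 + Complex.I * β) := by
    rw [hDen 1]
    norm_num [Polynomial.Chebyshev.U_neg_one, Polynomial.Chebyshev.U_zero]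
  have h1β : (1 : ℂ) + Complex.I * β ≠ 0 := by
    intro h; exact hDen0 1 (by rw [hDen1, h, neg_zero])
  have hU0 : (Polynomial.Chebyshev.U ℂ (((1 : ℕ) : ℤ) - 1)).eval z = 1 := by
    rw [show (((1 : ℕ) : ℤ) - 1 : ℤ) = 0 by norm_num, Polynomial.Chebyshev.U_zero]
    simp
  have ht' : t = 1 / (1 + Complex.I * β) := by
    rw [ht, htN 1, hDen1, show (1 - ((1 : ℕ) : ℤ) : ℤ) = 0 by norm_num, zpow_zero,
      neg_div_neg_eq]
  have hr' : r = -(Complex.I * β) / (1 + Complex.I * β) := by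
    rw [hr, hrN 1, hDen1, hU0, mul_one, div_neg, neg_div]
  intro N hN
  obtain ⟨M, rfl⟩ : ∃ M : ℕ, N = M + 1 := ⟨N - 1, (Nat.succ_pred_eq_of_pos hN).symm⟩
  set N := M + 1 with hNd
  set a := (Polynomial.Chebyshev.U ℂ ((N : ℤ) - 2)).eval z with ha
  set b := (Polynomial.Chebyshev.U ℂ ((N : ℤ) - 1)).eval z with hb
  set c := (Polynomial.Chebyshev.U ℂ (N : ℤ)).eval z with hc
  have hDN : Den N = ε * a - (1 + Complex.I * β) * b := hDen N
  have i1 : ((N + 1 : ℕ) : ℤ) - 2 = (N : ℤ) - 1 := by push_cast; ring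
  have i2 : ((N + 1 : ℕ) : ℤ) - 1 = (N : ℤ) := by push_cast; ring
  have hDM : Den (N + 1) = ε * b - (1 + Complex.I * β) * c := by
    rw [hDen (N + 1), i1, i2]
  -- recurrence at N
  have hrecN : c = 2 * z * b - a := by
    have h1 := congrArg (Polynomial.eval z) (Polynomial.Chebyshev.U_add_two ℂ ((N : ℤ) - 2))
    simp only [Polynomial.eval_sub, Polynomial.eval_mul, Polynomial.eval_ofNat,
      Polynomial.eval_X] at h1
    rw [show ((N : ℤ) - 2 + 2 : ℤ) = (N : ℤ) by ring,
      show ((N : ℤ) - 2 + 1 : ℤ) = (N : ℤ) - 1 by ring] at h1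
    convert h1 using 2 <;> norm_num
  have hdetN : c * a = b ^ 2 - 1 := by
    have := hdet M
    rw [ha, hb, hc, hNd]
    push_cast
    rw [show ((M : ℤ) + 1 - 2 : ℤ) = (M : ℤ) - 1 by ring,
      show ((M : ℤ) + 1 - 1 : ℤ) = (M : ℤ) by ring]
    linear_combination this
  -- the two key algebraic lemmas
  have lemma1 : ε * Den (N + 1) = (1 + Complex.I * β) * Den N - β ^ 2 * ε ^ 2 * b := by
    rw [hDN, hDM]
    linear_combination (-(1 + Complex.I * β) * ε) * hrecN + (-(1 + Complex.I * β) * b) * hkey +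
      (β : ℂ) ^ 2 * ε ^ 2 * b * Complex.I_sq
  have lemma2 : c * Den N = b * Den (N + 1) - ε := by
    rw [hDN, hDM]
    linear_combination ε * hdetN
  have hDN0 : Den N ≠ 0 := hDen0 N
  have hDM0 : Den (N + 1) ≠ 0 := hDen0 (N + 1)
  have hE0 : ε ^ N ≠ 0 := pow_ne_zero _ hε0
  have hp1 : ε ^ (1 - (N : ℤ)) = ε / ε ^ N := by
    rw [zpow_sub₀ hε0, zpow_one, zpow_natCast]
  have hp2 : ε ^ (1 - ((N + 1 : ℕ) : ℤ)) = 1 / ε ^ N := by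
    rw [show (1 - ((N + 1 : ℕ) : ℤ) : ℤ) = -(N : ℤ) by push_cast; ring, zpow_neg,
      zpow_natCast, one_div]
  have hp3 : (ε : ℂ) ^ (2 * N) = (ε ^ N) ^ 2 := by
    rw [pow_mul']
  have hXval : 1 - ε ^ 2 * r * rN N = ε * Den (N + 1) / ((1 + Complex.I * β) * Den N) := by
    rw [hrN N, ← hb, hr']
    field_simp
    linear_combination -lemma1 + ε ^ 2 * (β : ℂ) ^ 2 * b * Complex.I_sq
  have hC : ε ^ (2 * N) * r * (tN N) ^ 2 / (1 - ε ^ 2 * r * rN N) =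
      -(Complex.I * β * ε) / (Den N * Den (N + 1)) := by
    rw [div_eq_iff (hnz N), hXval, htN N, hp1, hp3, hr']
    field_simp
  constructor
  · rw [hrN (N + 1), i2, ← hc, hC, hrN N, ← hb]
    field_simp
    linear_combination (β : ℂ) * lemma2
  · rw [hXval, htN (N + 1), hp2, htN N, hp1, ht', div_div_eq_mul_div]
    field_simp
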